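/- Let R = ℤ[t, t^{-1}] be the ring of Laurent polynomials over ℤ, and let K be the set of 3×3 matrices over R of the form (A, B, C, D) := [[1, B, D], [0, A, C], [0, 0, 1]] with B, C, D ∈ R and A = t^k for some k ∈ ℤ. Then K is a subgroup of the group of invertible 3×3 matrices over R, and K is generated by the three elements k_1 = (t, 0, 0, 0), k_2 = (1, 1, 0, 0), and k_3 = (1, 0, 1, 0). -/

import Mathlib

open LaurentPolynomial

/-- The ring `R = ℤ[t, t⁻¹]` of Laurent polynomials over `ℤ`. -/
abbrev LaurentZ : Type := LaurentPolynomial ℤ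

/-- The upper triangular matrix `(A, B, C, D) = [[1, B, D], [0, A, C], [0, 0, 1]]`. -/
noncomputable def Mquad (A B C D : LaurentZ) : Matrix (Fin 3) (Fin 3) LaurentZ :=
  !![1, B, D; 0, A, C; 0, 0, 1]

/-- The set of invertible `3 × 3` matrices over `ℤ[t, t⁻¹]` of the form `(A, B, C, D)` with
`A = tᵏ` for some `k : ℤ`. -/
def Kset : Set (Matrix (Fin 3) (Fin 3) LaurentZ)ˣ :=
  { u | ∃ (k : ℤ) (B C D : LaurentZ),
      (u : Matrix (Fin 3) (Fin 3) LaurentZ) = Mquad (T k) B C D }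

lemma Mquad_mul (A B C D X Y Z W : LaurentZ) :
    Mquad A B C D * Mquad X Y Z W
      = Mquad (A * X) (Y + B * X) (A * Z + C) (W + B * Z + D) := by
  unfold Mquad
  rw [Matrix.mul_fin_three]
  congr 1 <;> ring

lemma Mquad_one : Mquad 1 0 0 0 = 1 := by
  unfold Mquad
  rw [Matrix.one_fin_three]

lemma Mquad_congr {a b c d a' b' c' d' : LaurentZ} (h1 : a = a') (h2 : b = b')
    (h3 : c = c') (h4 : d = d') : Mquad a b c d = Mquad a' b' c' d' := by
  rw [h1, h2, h3, h4]

lemma T_mul_T_neg (k : ℤ) : (T k : LaurentZ) * T (-k) = 1 := by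
  rw [← T_add, add_neg_cancel, T_zero]

lemma T_neg_mul_T (k : ℤ) : (T (-k) : LaurentZ) * T k = 1 := by
  rw [← T_add, neg_add_cancel, T_zero]

noncomputable def uq (k : ℤ) (B C D : LaurentZ) : (Matrix (Fin 3) (Fin 3) LaurentZ)ˣ where
  val := Mquad (T k) B C D
  inv := Mquad (T (-k)) (-(B * T (-k))) (-(T (-k) * C)) (B * (T (-k) * C) - D)
  val_inv := by
    rw [Mquad_mul, ← Mquad_one]
    exact Mquad_congr (T_mul_T_neg k) (by ring)
      (by linear_combination (-C) * T_mul_T_neg k) (by ring)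
  inv_val := by
    rw [Mquad_mul, ← Mquad_one]
    exact Mquad_congr (T_neg_mul_T k) (by linear_combination (-B) * T_neg_mul_T k)
      (by ring) (by ring)

lemma uq_congr {k k' : ℤ} {B B' C C' D D' : LaurentZ} (h1 : k = k') (h2 : B = B')
    (h3 : C = C') (h4 : D = D') : uq k B C D = uq k' B' C' D' := by
  rw [h1, h2, h3, h4]

@[simp] lemma uq_val (k : ℤ) (B C D : LaurentZ) :
    (uq k B C D : Matrix (Fin 3) (Fin 3) LaurentZ) = Mquad (T k) B C D := rfl

lemma uq_mul (k l : ℤ) (B C D Y Z W : LaurentZ) :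
    uq k B C D * uq l Y Z W
      = uq (k + l) (Y + B * T l) (T k * Z + C) (W + B * Z + D) :=
  Units.ext <| by
    rw [Units.val_mul, uq_val, uq_val, uq_val, Mquad_mul, T_add]

lemma uq_inv (k : ℤ) (B C D : LaurentZ) :
    (uq k B C D)⁻¹ = uq (-k) (-(B * T (-k))) (-(T (-k) * C)) (B * (T (-k) * C) - D) :=
  Units.ext rfl

lemma uq_zero : uq 0 0 0 0 = 1 :=
  Units.ext <| by rw [uq_val, T_zero, Mquad_one, Units.val_one]

/-- `Kset` bundled as a subgroup. -/
noncomputable def Ksub : Subgroup (Matrix (Fin 3) (Fin 3) LaurentZ)ˣ where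
  carrier := Kset
  one_mem' := ⟨0, 0, 0, 0, by rw [Units.val_one, T_zero, Mquad_one]⟩
  mul_mem' := by
    rintro a b ⟨k, B, C, D, ha⟩ ⟨l, Y, Z, W, hb⟩
    exact ⟨k + l, _, _, _, by rw [Units.val_mul, ha, hb, Mquad_mul, T_add]⟩
  inv_mem' := by
    rintro a ⟨k, B, C, D, h⟩
    have ha : a = uq k B C D := Units.ext h
    rw [ha, uq_inv]
    exact ⟨-k, _, _, _, rfl⟩

theorem stmt16 : ∃ K : Subgroup (Matrix (Fin 3) (Fin 3) LaurentZ)ˣ,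
    (K : Set (Matrix (Fin 3) (Fin 3) LaurentZ)ˣ) = Kset ∧
    K = Subgroup.closure
      { u : (Matrix (Fin 3) (Fin 3) LaurentZ)ˣ |
        (u : Matrix (Fin 3) (Fin 3) LaurentZ) = Mquad (T 1) 0 0 0 ∨
        (u : Matrix (Fin 3) (Fin 3) LaurentZ) = Mquad 1 1 0 0 ∨
        (u : Matrix (Fin 3) (Fin 3) LaurentZ) = Mquad 1 0 1 0 } := by
  set S : Set (Matrix (Fin 3) (Fin 3) LaurentZ)ˣ :=
      { u : (Matrix (Fin 3) (Fin 3) LaurentZ)ˣ |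
        (u : Matrix (Fin 3) (Fin 3) LaurentZ) = Mquad (T 1) 0 0 0 ∨
        (u : Matrix (Fin 3) (Fin 3) LaurentZ) = Mquad 1 1 0 0 ∨
        (u : Matrix (Fin 3) (Fin 3) LaurentZ) = Mquad 1 0 1 0 } with hSdef
  refine ⟨Subgroup.closure S, ?_, rfl⟩
  -- generators as units
  have hg1 : uq 1 0 0 0 ∈ Subgroup.closure S :=
    Subgroup.subset_closure (Or.inl rfl)
  have hg2 : uq 0 1 0 0 ∈ Subgroup.closure S :=
    Subgroup.subset_closure (Or.inr (Or.inl (by rw [uq_val, T_zero])))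
  have hg3 : uq 0 0 1 0 ∈ Subgroup.closure S :=
    Subgroup.subset_closure (Or.inr (Or.inr (by rw [uq_val, T_zero])))
  -- powers of the diagonal generator
  have hdiag : ∀ k : ℤ, uq k 0 0 0 ∈ Subgroup.closure S := by
    intro k
    induction k using Int.induction_on with
    | zero => rw [uq_zero]; exact one_mem _
    | succ k ih =>
        have e : uq k 0 0 0 * uq 1 0 0 0 = uq (k + 1) 0 0 0 := by
          rw [uq_mul]; exact uq_congr rfl (by ring) (by ring) (by ring)
        exact e ▸ mul_mem ih hg1
    | pred k ih =>
        have e : uq (-k) 0 0 0 * (uq 1 0 0 0)⁻¹ = uq (-k - 1) 0 0 0 := by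
          rw [uq_inv, uq_mul]
          exact uq_congr (by ring) (by ring) (by ring) (by ring)
        exact e ▸ mul_mem ih (inv_mem hg1)
  -- B-shears
  have hBneg : ∀ Y : LaurentZ, uq 0 Y 0 0 ∈ Subgroup.closure S →
      uq 0 (-Y) 0 0 ∈ Subgroup.closure S := by
    intro Y hY
    have e : (uq 0 Y 0 0)⁻¹ = uq 0 (-Y) 0 0 := by
      rw [uq_inv]
      exact uq_congr (by ring) (by rw [neg_zero, T_zero]; ring) (by ring) (by ring)
    exact e ▸ inv_mem hY
  have hBadd : ∀ Y Z : LaurentZ, uq 0 Y 0 0 ∈ Subgroup.closure S →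
      uq 0 Z 0 0 ∈ Subgroup.closure S → uq 0 (Y + Z) 0 0 ∈ Subgroup.closure S := by
    intro Y Z hY hZ
    have e : uq 0 Y 0 0 * uq 0 Z 0 0 = uq 0 (Y + Z) 0 0 := by
      rw [uq_mul]
      exact uq_congr (by ring) (by rw [T_zero]; ring) (by ring) (by ring)
    exact e ▸ mul_mem hY hZ
  have hBconj : ∀ (m : ℤ) (Y : LaurentZ), uq 0 Y 0 0 ∈ Subgroup.closure S →
      uq 0 (Y * T m) 0 0 ∈ Subgroup.closure S := by
    intro m Y hY
    have e : uq (-m) 0 0 0 * uq 0 Y 0 0 * uq m 0 0 0 = uq 0 (Y * T m) 0 0 := by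
      rw [uq_mul, uq_mul]
      exact uq_congr (by ring) (by rw [T_zero]; ring) (by ring) (by ring)
    exact e ▸ mul_mem (mul_mem (hdiag (-m)) hY) (hdiag m)
  have hBint : ∀ a : ℤ, uq 0 (LaurentPolynomial.C a) 0 0 ∈ Subgroup.closure S := by
    intro a
    induction a using Int.induction_on with
    | zero => rw [map_zero, uq_zero]; exact one_mem _
    | succ a ih =>
        rw [map_add, map_one]
        exact hBadd _ _ ih hg2
    | pred a ih =>
        rw [show (-(a : ℤ) - 1) = -(a : ℤ) + (-1) by ring, map_add,
          show (LaurentPolynomial.C (-1 : ℤ) : LaurentZ) = -1 by simp]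
        exact hBadd _ _ ih (hBneg _ hg2)
  have hB : ∀ B : LaurentZ, uq 0 B 0 0 ∈ Subgroup.closure S := by
    intro B
    induction B using LaurentPolynomial.induction_on' with
    | add p q hp hq => exact hBadd _ _ hp hq
    | C_mul_T n a => exact hBconj n _ (hBint a)
  -- C-shears
  have hCneg : ∀ Z : LaurentZ, uq 0 0 Z 0 ∈ Subgroup.closure S →
      uq 0 0 (-Z) 0 ∈ Subgroup.closure S := by
    intro Z hZ
    have e : (uq 0 0 Z 0)⁻¹ = uq 0 0 (-Z) 0 := by
      rw [uq_inv]
      exact uq_congr (by ring) (by ring) (by rw [neg_zero, T_zero]; ring) (by ring)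
    exact e ▸ inv_mem hZ
  have hCadd : ∀ Y Z : LaurentZ, uq 0 0 Y 0 ∈ Subgroup.closure S →
      uq 0 0 Z 0 ∈ Subgroup.closure S → uq 0 0 (Y + Z) 0 ∈ Subgroup.closure S := by
    intro Y Z hY hZ
    have e : uq 0 0 Z 0 * uq 0 0 Y 0 = uq 0 0 (Y + Z) 0 := by
      rw [uq_mul]
      exact uq_congr (by ring) (by ring) (by rw [T_zero]; ring) (by ring)
    exact e ▸ mul_mem hZ hY
  have hCconj : ∀ (m : ℤ) (Z : LaurentZ), uq 0 0 Z 0 ∈ Subgroup.closure S →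
      uq 0 0 (T m * Z) 0 ∈ Subgroup.closure S := by
    intro m Z hZ
    have e : uq m 0 0 0 * uq 0 0 Z 0 * uq (-m) 0 0 0 = uq 0 0 (T m * Z) 0 := by
      rw [uq_mul, uq_mul]
      exact uq_congr (by ring) (by ring) (by ring) (by ring)
    exact e ▸ mul_mem (mul_mem (hdiag m) hZ) (hdiag (-m))
  have hCint : ∀ a : ℤ, uq 0 0 (LaurentPolynomial.C a) 0 ∈ Subgroup.closure S := by
    intro a
    induction a using Int.induction_on with
    | zero => rw [map_zero, uq_zero]; exact one_mem _
    | succ a ih =>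
        rw [map_add, map_one]
        exact hCadd _ _ ih hg3
    | pred a ih =>
        rw [show (-(a : ℤ) - 1) = -(a : ℤ) + (-1) by ring, map_add,
          show (LaurentPolynomial.C (-1 : ℤ) : LaurentZ) = -1 by simp]
        exact hCadd _ _ ih (hCneg _ hg3)
  have hC : ∀ Z : LaurentZ, uq 0 0 Z 0 ∈ Subgroup.closure S := by
    intro Z
    induction Z using LaurentPolynomial.induction_on' with
    | add p q hp hq => exact hCadd _ _ hp hq
    | C_mul_T n a =>
        have h := hCconj n _ (hCint a)
        rwa [mul_comm] at h
  -- D-shears as commutators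
  have hD : ∀ D : LaurentZ, uq 0 0 0 D ∈ Subgroup.closure S := by
    intro D
    have e : uq 0 D 0 0 * uq 0 0 1 0 * (uq 0 D 0 0)⁻¹ * (uq 0 0 1 0)⁻¹
        = uq 0 0 0 D := by
      rw [uq_inv, uq_inv, uq_mul, uq_mul, uq_mul]
      refine uq_congr (by ring) ?_ ?_ ?_ <;>
        simp only [neg_zero, add_zero, zero_add, mul_zero, zero_mul, T_zero,
          mul_one, one_mul] <;> ring
    exact e ▸ mul_mem (mul_mem (mul_mem (hB D) (hC 1)) (inv_mem (hB D)))
      (inv_mem (hC 1))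
  -- every element of `Kset` is in the closure
  have hall : ∀ (k : ℤ) (B C D : LaurentZ), uq k B C D ∈ Subgroup.closure S := by
    intro k B C D
    have e : uq k 0 0 0 * (uq 0 B 0 0 * uq 0 0 (T (-k) * C) 0
        * uq 0 0 0 (D - B * (T (-k) * C))) = uq k B C D := by
      rw [uq_mul, uq_mul, uq_mul]
      refine uq_congr (by ring) ?_ ?_ ?_ <;>
        simp only [neg_zero, add_zero, zero_add, mul_zero, zero_mul, T_zero,
          mul_one, one_mul]
      · linear_combination C * T_mul_T_neg k
      · ring
    exact e ▸ mul_mem (hdiag k)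
      (mul_mem (mul_mem (hB B) (hC _)) (hD _))
  -- set equality
  ext u
  constructor
  · intro hu
    have hsub : S ⊆ (Ksub : Set (Matrix (Fin 3) (Fin 3) LaurentZ)ˣ) := by
      rintro v (h | h | h)
      · exact ⟨1, 0, 0, 0, h⟩
      · exact ⟨0, 1, 0, 0, by rw [T_zero]; exact h⟩
      · exact ⟨0, 0, 1, 0, by rw [T_zero]; exact h⟩
    exact (Subgroup.closure_le Ksub).mpr hsub hu
  · rintro ⟨k, B, C, D, h⟩
    have hu : u = uq k B C D := Units.ext h
    rw [SetLike.mem_coe, hu]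
    exact hall k B C D
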